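/- Every graph obtained from the complete graph K_4 by performing a finite sequence of 2-lifts has twin-width at most 6. -/

import Mathlib

/-- A trigraph: a finite vertex set with disjoint black and red edge sets. -/
structure Trigraph (V : Type*) where
  verts : Finset V
  black : V → V → Prop
  red : V → V → Prop
  black_symm : ∀ u v, black u v → black v u
  red_symm : ∀ u v, red u v → red v u
  black_irrefl : ∀ u, ¬ black u u
  red_irrefl : ∀ u, ¬ red u u
  black_red_disjoint : ∀ u v, black u v → ¬ red u v
  black_mem : ∀ u v, black u v → u ∈ verts ∧ v ∈ verts
  red_mem : ∀ u v, red u v → u ∈ verts ∧ v ∈ verts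

namespace Trigraph

variable {V : Type*} [DecidableEq V]

/-- The red degree of a vertex. -/
noncomputable def redDeg (G : Trigraph V) (x : V) : ℕ := {y | G.red x y}.ncard

/-- `G` is a `d`-trigraph: every vertex is incident to at most `d` red edges. -/
def RedDegLE (G : Trigraph V) (d : ℕ) : Prop := ∀ x, G.redDeg x ≤ d

/-- `G'` is obtained from `G` by contracting the two distinct vertices `u` and `v`
(the contracted vertex is represented by `u`, and `v` is deleted). -/
def IsContractionAt (G G' : Trigraph V) (u v : V) : Prop :=
  u ∈ G.verts ∧ v ∈ G.verts ∧ u ≠ v ∧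
  G'.verts = G.verts.erase v ∧
  (∀ x y, x ≠ u → y ≠ u → (G'.black x y ↔ (G.black x y ∧ x ≠ v ∧ y ≠ v))) ∧
  (∀ x y, x ≠ u → y ≠ u → (G'.red x y ↔ (G.red x y ∧ x ≠ v ∧ y ≠ v))) ∧
  (∀ x, x ≠ u → x ≠ v → (G'.black u x ↔ (G.black u x ∧ G.black v x))) ∧
  (∀ x, x ≠ u → x ≠ v →
    (G'.red u x ↔
      ((G.black u x ∨ G.red u x ∨ G.black v x ∨ G.red v x) ∧ ¬ (G.black u x ∧ G.black v x))))

/-- `G'` is obtained from `G` by contracting some pair of vertices. -/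
def IsContraction (G G' : Trigraph V) : Prop := ∃ u v, IsContractionAt G G' u v

/-- `G` admits a `d`-sequence: a sequence `G = G_n, …, G_1` of `d`-trigraphs, each obtained
from the previous one by a contraction, ending in a one-vertex trigraph. -/
def HasSeq (G : Trigraph V) (d : ℕ) : Prop :=
  ∃ f : ℕ → Trigraph V,
    f G.verts.card = G ∧
    (∀ i, 1 ≤ i → i < G.verts.card → IsContraction (f (i + 1)) (f i)) ∧
    (∀ i, 1 ≤ i → i ≤ G.verts.card → (f i).RedDegLE d)

/-- The twin-width of a trigraph: the least `d` such that it admits a `d`-sequence. -/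
noncomputable def tww (G : Trigraph V) : ℕ := sInf {d | G.HasSeq d}

end Trigraph

/-- The trigraph induced by a simple graph `G` on the vertex set `s`: all edges black. -/
def SimpleGraph.toTrigraphOn {V : Type*} (G : SimpleGraph V) (s : Finset V) : Trigraph V where
  verts := s
  black u v := G.Adj u v ∧ u ∈ s ∧ v ∈ s
  red _ _ := False
  black_symm := fun _ _ ⟨h, hu, hv⟩ => ⟨h.symm, hv, hu⟩
  red_symm := fun _ _ h => h.elim
  black_irrefl := fun u h => G.loopless.irrefl u h.1
  red_irrefl := fun _ h => h
  black_red_disjoint := fun _ _ _ h => h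
  black_mem := fun _ _ ⟨_, hu, hv⟩ => ⟨hu, hv⟩
  red_mem := fun _ _ h => h.elim

/-- The trigraph associated to a finite simple graph: all edges black. -/
def SimpleGraph.toTrigraph {V : Type*} [Fintype V] (G : SimpleGraph V) : Trigraph V :=
  G.toTrigraphOn Finset.univ

/-- Iterated 2-lift vertex types, starting from K4. -/
def LiftType : ℕ → Type
  | 0 => Fin 4
  | k + 1 => LiftType k × Bool

instance liftTypeFintype : ∀ k, Fintype (LiftType k)
  | 0 => inferInstanceAs (Fintype (Fin 4))
  | (k + 1) => letI := liftTypeFintype k; inferInstanceAs (Fintype (LiftType k × Bool))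

instance liftTypeDecEq : ∀ k, DecidableEq (LiftType k)
  | 0 => inferInstanceAs (DecidableEq (Fin 4))
  | (k + 1) => letI := liftTypeDecEq k; inferInstanceAs (DecidableEq (LiftType k × Bool))

/-- `G'` is a 2-lift of `G`. -/
def IsTwoLift {V : Type*} (G : SimpleGraph V) (G' : SimpleGraph (V × Bool)) : Prop :=
  ∃ sign : V → V → Bool,
    (∀ u v, sign u v = sign v u) ∧
    ∀ u v i j, G'.Adj (u, i) (v, j) ↔
      (G.Adj u v ∧ ((sign u v = true ∧ i = j) ∨ (sign u v = false ∧ i ≠ j)))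

/-! ### Auxiliary machinery -/

set_option linter.unusedSectionVars false

section Aux

open Finset

variable {V : Type*} [DecidableEq V]

namespace Trigraph

lemma ext' {G H : Trigraph V} (hv : G.verts = H.verts)
    (hb : ∀ u v, G.black u v ↔ H.black u v) (hr : ∀ u v, G.red u v ↔ H.red u v) :
    G = H := by
  obtain ⟨v1, b1, r1, _, _, _, _, _, _, _⟩ := G
  obtain ⟨v2, b2, r2, _, _, _, _, _, _, _⟩ := H
  have hb' : b1 = b2 := by funext u v; exact propext (hb u v)
  have hr' : r1 = r2 := by funext u v; exact propext (hr u v)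
  simp only at hv
  subst hv hb' hr'
  rfl

lemma redDeg_le_card (G : Trigraph V) (x : V) : G.redDeg x ≤ G.verts.card - 1 := by
  by_cases hx : x ∈ G.verts
  · have hsub : {y | G.red x y} ⊆ (↑(G.verts.erase x) : Set V) := by
      intro y hy
      simp only [Finset.coe_erase, Set.mem_diff, Set.mem_singleton_iff]
      refine ⟨(G.red_mem _ _ hy).2, fun h => G.red_irrefl x (h ▸ hy)⟩
    calc G.redDeg x ≤ (↑(G.verts.erase x) : Set V).ncard :=
          Set.ncard_le_ncard hsub (Finset.finite_toSet _)
      _ = (G.verts.erase x).card := Set.ncard_coe_finset _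
      _ = G.verts.card - 1 := Finset.card_erase_of_mem hx
  · have : {y | G.red x y} = ∅ := by
      ext y; simp only [Set.mem_setOf_eq, Set.mem_empty_iff_false, iff_false]
      intro hy; exact hx (G.red_mem _ _ hy).1
    simp [redDeg, this]

/-- A partial contraction sequence from `G` down to `H` with red degrees at most `d`. -/
def Seq (G H : Trigraph V) (d : ℕ) : Prop :=
  H.verts.card ≤ G.verts.card ∧
  ∃ f : ℕ → Trigraph V, f G.verts.card = G ∧ f H.verts.card = H ∧
    (∀ i, H.verts.card ≤ i → i < G.verts.card → IsContraction (f (i + 1)) (f i)) ∧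
    (∀ i, H.verts.card ≤ i → i ≤ G.verts.card → (f i).RedDegLE d)

lemma Seq.refl {G : Trigraph V} {d : ℕ} (h : G.RedDegLE d) : Seq G G d :=
  ⟨le_rfl, fun _ => G, rfl, rfl, fun _ h1 h2 => absurd h2 (by omega), fun _ _ _ => h⟩

lemma Seq.single {G H : Trigraph V} {u v : V} {d : ℕ} (h : IsContractionAt G H u v)
    (hG : G.RedDegLE d) (hH : H.RedDegLE d) : Seq G H d := by
  obtain ⟨hu, hv, huv, hverts, -⟩ := id h
  have hpos : 1 ≤ G.verts.card := Finset.card_pos.mpr ⟨v, hv⟩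
  have hcard : H.verts.card + 1 = G.verts.card := by
    rw [hverts, Finset.card_erase_of_mem hv]; omega
  refine ⟨by omega, fun i => if i = G.verts.card then G else H, by simp, ?_, ?_, ?_⟩
  · beta_reduce; rw [if_neg (by omega)]
  · intro i h1 h2
    have hi : i = H.verts.card := by omega
    have hi1 : i + 1 = G.verts.card := by omega
    beta_reduce; rw [if_pos hi1, if_neg (by omega)]
    exact ⟨u, v, h⟩
  · intro i _ _
    dsimp only
    split
    · exact hG
    · exact hH

lemma Seq.trans {G H K : Trigraph V} {d : ℕ} (h1 : Seq G H d) (h2 : Seq H K d) :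
    Seq G K d := by
  obtain ⟨le1, f, hfG, hfH, hfc, hfr⟩ := h1
  obtain ⟨le2, g, hgH, hgK, hgc, hgr⟩ := h2
  refine ⟨le_trans le2 le1, fun i => if i < H.verts.card then g i else f i, ?_, ?_, ?_, ?_⟩
  · beta_reduce; rw [if_neg (by omega)]; exact hfG
  · by_cases hKH : K.verts.card < H.verts.card
    · beta_reduce; rw [if_pos hKH]; exact hgK
    · have hEq : K.verts.card = H.verts.card := by omega
      have hHK : H = K := by rw [← hgH, ← hgK, hEq]
      beta_reduce; rw [if_neg (by omega), hEq, hfH, hHK]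
  · intro i hKi hiG
    by_cases hi : i < H.verts.card
    · by_cases h2' : i + 1 < H.verts.card
      · beta_reduce; rw [if_pos h2', if_pos hi]; exact hgc i hKi hi
      · have hE : i + 1 = H.verts.card := by omega
        beta_reduce; rw [if_neg h2', if_pos hi, hE, hfH, ← hgH, ← hE]; exact hgc i hKi hi
    · beta_reduce; rw [if_neg (by omega : ¬ i + 1 < H.verts.card), if_neg hi]
      exact hfc i (by omega) hiG
  · intro i hKi hiG
    by_cases hi : i < H.verts.card
    · beta_reduce; rw [if_pos hi]; exact hgr i hKi (by omega)
    · beta_reduce; rw [if_neg hi]; exact hfr i (by omega) hiG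

lemma Seq.hasSeq {G H : Trigraph V} {d : ℕ} (h : Seq G H d) (hH : H.HasSeq d) :
    G.HasSeq d := by
  obtain ⟨hle, f, hfG, hfH, hfc, hfr⟩ := h
  obtain ⟨g, hgH, hgc, hgr⟩ := hH
  refine ⟨fun i => if i < H.verts.card then g i else f i, ?_, ?_, ?_⟩
  · beta_reduce; rw [if_neg (by omega)]; exact hfG
  · intro i h1 h2
    by_cases hi : i < H.verts.card
    · by_cases h2' : i + 1 < H.verts.card
      · beta_reduce; rw [if_pos h2', if_pos hi]; exact hgc i h1 hi
      · have hE : i + 1 = H.verts.card := by omega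
        beta_reduce; rw [if_neg (by omega : ¬ i + 1 < H.verts.card), if_pos hi, hE, hfH, ← hgH, ← hE]
        exact hgc i h1 hi
    · beta_reduce; rw [if_neg (by omega : ¬ i + 1 < H.verts.card), if_neg hi]
      exact hfc i (by omega) h2
  · intro i h1 h2
    by_cases hi : i < H.verts.card
    · beta_reduce; rw [if_pos hi]; exact hgr i h1 (by omega)
    · beta_reduce; rw [if_neg hi]; exact hfr i (by omega) h2

/-- The generic contraction of two vertices in a trigraph. -/
def contract (G : Trigraph V) (u v : V) : Trigraph V where
  verts := G.verts.erase v
  black x y := x ∈ G.verts ∧ y ∈ G.verts ∧ x ≠ v ∧ y ≠ v ∧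
    ((x ≠ u ∧ y ≠ u ∧ G.black x y) ∨
     (x = u ∧ y ≠ u ∧ G.black u y ∧ G.black v y) ∨
     (y = u ∧ x ≠ u ∧ G.black u x ∧ G.black v x))
  red x y := x ∈ G.verts ∧ y ∈ G.verts ∧ x ≠ v ∧ y ≠ v ∧
    ((x ≠ u ∧ y ≠ u ∧ G.red x y) ∨
     (x = u ∧ y ≠ u ∧ (G.black u y ∨ G.red u y ∨ G.black v y ∨ G.red v y) ∧
        ¬(G.black u y ∧ G.black v y)) ∨
     (y = u ∧ x ≠ u ∧ (G.black u x ∨ G.red u x ∨ G.black v x ∨ G.red v x) ∧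
        ¬(G.black u x ∧ G.black v x)))
  black_symm := by
    rintro x y ⟨hx, hy, hxv, hyv, h⟩
    refine ⟨hy, hx, hyv, hxv, ?_⟩
    rcases h with ⟨a, b, c⟩ | ⟨a, b, c⟩ | ⟨a, b, c⟩
    · exact Or.inl ⟨b, a, G.black_symm _ _ c⟩
    · exact Or.inr (Or.inr ⟨a, b, c⟩)
    · exact Or.inr (Or.inl ⟨a, b, c⟩)
  red_symm := by
    rintro x y ⟨hx, hy, hxv, hyv, h⟩
    refine ⟨hy, hx, hyv, hxv, ?_⟩
    rcases h with ⟨a, b, c⟩ | ⟨a, b, c⟩ | ⟨a, b, c⟩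
    · exact Or.inl ⟨b, a, G.red_symm _ _ c⟩
    · exact Or.inr (Or.inr ⟨a, b, c⟩)
    · exact Or.inr (Or.inl ⟨a, b, c⟩)
  black_irrefl := by
    rintro x ⟨-, -, -, -, h⟩
    rcases h with ⟨-, -, c⟩ | ⟨a, b, -⟩ | ⟨a, b, -⟩
    · exact G.black_irrefl x c
    · exact b a
    · exact b a
  red_irrefl := by
    rintro x ⟨-, -, -, -, h⟩
    rcases h with ⟨-, -, c⟩ | ⟨a, b, -⟩ | ⟨a, b, -⟩
    · exact G.red_irrefl x c
    · exact b a
    · exact b a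
  black_red_disjoint := by
    rintro x y ⟨-, -, -, -, hb⟩ ⟨-, -, -, -, hr⟩
    rcases hb with ⟨hb1, hb2, hb3⟩ | ⟨hb1, hb2, hb3, hb4⟩ | ⟨hb1, hb2, hb3, hb4⟩ <;>
      rcases hr with ⟨hr1, hr2, hr3⟩ | ⟨hr1, hr2, hr3, hr4⟩ | ⟨hr1, hr2, hr3, hr4⟩
    · exact G.black_red_disjoint x y hb3 hr3
    · exact hb1 hr1
    · exact hb2 hr1
    · exact hr1 hb1
    · exact hr4 ⟨hb3, hb4⟩
    · exact hb2 hr1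
    · exact hr2 hb1
    · exact hb2 hr1
    · exact hr4 ⟨hb3, hb4⟩
  black_mem := by
    rintro x y ⟨hx, hy, hxv, hyv, -⟩
    exact ⟨Finset.mem_erase.mpr ⟨hxv, hx⟩, Finset.mem_erase.mpr ⟨hyv, hy⟩⟩
  red_mem := by
    rintro x y ⟨hx, hy, hxv, hyv, -⟩
    exact ⟨Finset.mem_erase.mpr ⟨hxv, hx⟩, Finset.mem_erase.mpr ⟨hyv, hy⟩⟩

lemma contract_isContractionAt {G : Trigraph V} {u v : V} (hu : u ∈ G.verts)
    (hv : v ∈ G.verts) (huv : u ≠ v) : IsContractionAt G (G.contract u v) u v := by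
  refine ⟨hu, hv, huv, rfl, ?_, ?_, ?_, ?_⟩
  · intro x y hxu hyu
    constructor
    · rintro ⟨hx, hy, hxv, hyv, h⟩
      rcases h with ⟨-, -, hb⟩ | ⟨ha, -, -⟩ | ⟨ha, -, -⟩
      · exact ⟨hb, hxv, hyv⟩
      · exact absurd ha hxu
      · exact absurd ha hyu
    · rintro ⟨hb, hxv, hyv⟩
      exact ⟨(G.black_mem _ _ hb).1, (G.black_mem _ _ hb).2, hxv, hyv,
        Or.inl ⟨hxu, hyu, hb⟩⟩
  · intro x y hxu hyu
    constructor
    · rintro ⟨hx, hy, hxv, hyv, h⟩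
      rcases h with ⟨-, -, hb⟩ | ⟨ha, -, -⟩ | ⟨ha, -, -⟩
      · exact ⟨hb, hxv, hyv⟩
      · exact absurd ha hxu
      · exact absurd ha hyu
    · rintro ⟨hb, hxv, hyv⟩
      exact ⟨(G.red_mem _ _ hb).1, (G.red_mem _ _ hb).2, hxv, hyv,
        Or.inl ⟨hxu, hyu, hb⟩⟩
  · intro x hxu hxv
    constructor
    · rintro ⟨-, -, -, -, h⟩
      rcases h with ⟨ha, -, -⟩ | ⟨-, -, h1, h2⟩ | ⟨ha, -, -⟩
      · exact absurd rfl ha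
      · exact ⟨h1, h2⟩
      · exact absurd ha hxu
    · rintro ⟨h1, h2⟩
      exact ⟨hu, (G.black_mem _ _ h1).2, huv, hxv, Or.inr (Or.inl ⟨rfl, hxu, h1, h2⟩)⟩
  · intro x hxu hxv
    constructor
    · rintro ⟨-, -, -, -, h⟩
      rcases h with ⟨ha, -, -⟩ | ⟨-, -, h1, h2⟩ | ⟨ha, -, -⟩
      · exact absurd rfl ha
      · exact ⟨h1, h2⟩
      · exact absurd ha hxu
    · rintro ⟨h1, h2⟩
      have hxm : x ∈ G.verts := by
        rcases h1 with h | h | h | h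
        exacts [(G.black_mem _ _ h).2, (G.red_mem _ _ h).2,
          (G.black_mem _ _ h).2, (G.red_mem _ _ h).2]
      exact ⟨hu, hxm, huv, hxv, Or.inr (Or.inl ⟨rfl, hxu, h1, h2⟩)⟩

/-- Any small trigraph has a `d`-sequence. -/
lemma hasSeq_of_small {d : ℕ} :
    ∀ n (G : Trigraph V), G.verts.card = n → 1 ≤ n → n ≤ d + 1 → G.HasSeq d := by
  intro n
  induction n with
  | zero => intro G _ h1 _; omega
  | succ n ih =>
    intro G hG h1 h2
    by_cases hn : n = 0
    · subst hn
      refine ⟨fun _ => G, rfl, ?_, ?_⟩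
      · intro i hi1 hi2; rw [hG] at hi2; omega
      · intro i _ _ x
        exact le_trans (G.redDeg_le_card x) (by omega)
    · have hn1 : 1 ≤ n := Nat.pos_of_ne_zero hn
      have h2c : 1 < G.verts.card := by omega
      obtain ⟨u, hu, v, hv, huv⟩ := Finset.one_lt_card.mp h2c
      have hC := contract_isContractionAt hu hv huv
      have hHc : (G.contract u v).verts.card = n := by
        show (G.verts.erase v).card = n
        rw [Finset.card_erase_of_mem hv, hG]; omega
      have hH := ih (G.contract u v) hHc hn1 (by omega)
      have hsq : Seq G (G.contract u v) d :=
        Seq.single hC (fun x => le_trans (G.redDeg_le_card x) (by omega))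
          (fun x => le_trans ((G.contract u v).redDeg_le_card x) (by omega))
      exact hsq.hasSeq hH

/-- Pushing a trigraph forward along an injection. -/
def tmap {W : Type*} [DecidableEq W] (e : V → W) (he : Function.Injective e)
    (G : Trigraph V) : Trigraph W where
  verts := G.verts.image e
  black x y := ∃ a b, G.black a b ∧ x = e a ∧ y = e b
  red x y := ∃ a b, G.red a b ∧ x = e a ∧ y = e b
  black_symm := by rintro x y ⟨a, b, h, rfl, rfl⟩; exact ⟨b, a, G.black_symm _ _ h, rfl, rfl⟩
  red_symm := by rintro x y ⟨a, b, h, rfl, rfl⟩; exact ⟨b, a, G.red_symm _ _ h, rfl, rfl⟩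
  black_irrefl := by
    rintro x ⟨a, b, h, rfl, hab⟩
    exact G.black_irrefl a (he hab ▸ h)
  red_irrefl := by
    rintro x ⟨a, b, h, rfl, hab⟩
    exact G.red_irrefl a (he hab ▸ h)
  black_red_disjoint := by
    rintro x y ⟨a, b, h, rfl, rfl⟩ ⟨a', b', h', ha, hb⟩
    exact G.black_red_disjoint a b h (he ha ▸ he hb ▸ h')
  black_mem := by
    rintro x y ⟨a, b, h, rfl, rfl⟩
    exact ⟨Finset.mem_image_of_mem e (G.black_mem _ _ h).1,
      Finset.mem_image_of_mem e (G.black_mem _ _ h).2⟩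
  red_mem := by
    rintro x y ⟨a, b, h, rfl, rfl⟩
    exact ⟨Finset.mem_image_of_mem e (G.red_mem _ _ h).1,
      Finset.mem_image_of_mem e (G.red_mem _ _ h).2⟩

variable {W : Type*} [DecidableEq W] {e : V → W} {he : Function.Injective e}

lemma tmap_black_iff {G : Trigraph V} {a b : V} :
    (tmap e he G).black (e a) (e b) ↔ G.black a b := by
  constructor
  · rintro ⟨a', b', h, ha, hb⟩
    rwa [he ha, he hb]
  · intro h; exact ⟨a, b, h, rfl, rfl⟩

lemma tmap_red_iff {G : Trigraph V} {a b : V} :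
    (tmap e he G).red (e a) (e b) ↔ G.red a b := by
  constructor
  · rintro ⟨a', b', h, ha, hb⟩
    rwa [he ha, he hb]
  · intro h; exact ⟨a, b, h, rfl, rfl⟩

lemma tmap_card {G : Trigraph V} : (tmap e he G).verts.card = G.verts.card :=
  Finset.card_image_of_injective _ he

lemma tmap_redDegLE {G : Trigraph V} {d : ℕ} (h : G.RedDegLE d) :
    (tmap e he G).RedDegLE d := by
  intro w
  by_cases hw : ∃ x, w = e x
  · obtain ⟨x, rfl⟩ := hw
    have : {y | (tmap e he G).red (e x) y} = e '' {y | G.red x y} := by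
      ext y
      simp only [Set.mem_setOf_eq, Set.mem_image]
      constructor
      · rintro ⟨a, b, h', ha, rfl⟩
        exact ⟨b, he ha ▸ h', rfl⟩
      · rintro ⟨b, hb, rfl⟩
        exact ⟨x, b, hb, rfl, rfl⟩
    rw [redDeg, this, Set.ncard_image_of_injective _ he]
    exact h x
  · have : {y | (tmap e he G).red w y} = ∅ := by
      ext y
      simp only [Set.mem_setOf_eq, Set.mem_empty_iff_false, iff_false]
      rintro ⟨a, b, -, rfl, -⟩
      exact hw ⟨a, rfl⟩
    simp [redDeg, this]

lemma tmap_isContractionAt {G G' : Trigraph V} {u v : V}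
    (h : IsContractionAt G G' u v) :
    IsContractionAt (tmap e he G) (tmap e he G') (e u) (e v) := by
  obtain ⟨hu, hv, huv, hverts, hb, hr, hbu, hru⟩ := h
  refine ⟨Finset.mem_image_of_mem e hu, Finset.mem_image_of_mem e hv,
    fun hh => huv (he hh), ?_, ?_, ?_, ?_, ?_⟩
  · show G'.verts.image e = _
    rw [hverts, Finset.image_erase he]
    rfl
  · intro x y hx hy
    constructor
    · rintro ⟨a, b, hab, rfl, rfl⟩
      have hau : a ≠ u := fun h => hx (by rw [h])
      have hbu' : b ≠ u := fun h => hy (by rw [h])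
      obtain ⟨h1, h2, h3⟩ := (hb a b hau hbu').mp hab
      exact ⟨⟨a, b, h1, rfl, rfl⟩, fun h => h2 (he h), fun h => h3 (he h)⟩
    · rintro ⟨⟨a, b, hab, rfl, rfl⟩, hxv, hyv⟩
      have hau : a ≠ u := fun h => hx (by rw [h])
      have hbu' : b ≠ u := fun h => hy (by rw [h])
      exact ⟨a, b, (hb a b hau hbu').mpr
        ⟨hab, fun h => hxv (by rw [h]), fun h => hyv (by rw [h])⟩, rfl, rfl⟩
  · intro x y hx hy
    constructor
    · rintro ⟨a, b, hab, rfl, rfl⟩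
      have hau : a ≠ u := fun h => hx (by rw [h])
      have hbu' : b ≠ u := fun h => hy (by rw [h])
      obtain ⟨h1, h2, h3⟩ := (hr a b hau hbu').mp hab
      exact ⟨⟨a, b, h1, rfl, rfl⟩, fun h => h2 (he h), fun h => h3 (he h)⟩
    · rintro ⟨⟨a, b, hab, rfl, rfl⟩, hxv, hyv⟩
      have hau : a ≠ u := fun h => hx (by rw [h])
      have hbu' : b ≠ u := fun h => hy (by rw [h])
      exact ⟨a, b, (hr a b hau hbu').mpr
        ⟨hab, fun h => hxv (by rw [h]), fun h => hyv (by rw [h])⟩, rfl, rfl⟩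
  · intro x hx hxv
    by_cases hex : ∃ w, x = e w
    · obtain ⟨w, rfl⟩ := hex
      have hwu : w ≠ u := fun h => hx (by rw [h])
      have hwv : w ≠ v := fun h => hxv (by rw [h])
      rw [show ((tmap e he G').black (e u) (e w) ↔ G'.black u w) from tmap_black_iff,
        show ((tmap e he G).black (e u) (e w) ↔ G.black u w) from tmap_black_iff,
        show ((tmap e he G).black (e v) (e w) ↔ G.black v w) from tmap_black_iff]
      exact hbu w hwu hwv
    · constructor
      · rintro ⟨a, b, -, -, hxb⟩
        exact absurd ⟨b, hxb⟩ hex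
      · rintro ⟨⟨a, b, -, -, hxb⟩, -⟩
        exact absurd ⟨b, hxb⟩ hex
  · intro x hx hxv
    by_cases hex : ∃ w, x = e w
    · obtain ⟨w, rfl⟩ := hex
      have hwu : w ≠ u := fun h => hx (by rw [h])
      have hwv : w ≠ v := fun h => hxv (by rw [h])
      rw [show ((tmap e he G').red (e u) (e w) ↔ G'.red u w) from tmap_red_iff,
        show ((tmap e he G).black (e u) (e w) ↔ G.black u w) from tmap_black_iff,
        show ((tmap e he G).red (e u) (e w) ↔ G.red u w) from tmap_red_iff,
        show ((tmap e he G).black (e v) (e w) ↔ G.black v w) from tmap_black_iff,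
        show ((tmap e he G).red (e v) (e w) ↔ G.red v w) from tmap_red_iff]
      exact hru w hwu hwv
    · constructor
      · rintro ⟨a, b, -, -, hxb⟩
        exact absurd ⟨b, hxb⟩ hex
      · rintro ⟨h4, -⟩
        rcases h4 with ⟨a, b, -, -, hxb⟩ | ⟨a, b, -, -, hxb⟩ | ⟨a, b, -, -, hxb⟩ | ⟨a, b, -, -, hxb⟩ <;>
          exact absurd ⟨b, hxb⟩ hex

lemma tmap_hasSeq {G : Trigraph V} {d : ℕ} (h : G.HasSeq d) :
    (tmap e he G).HasSeq d := by
  obtain ⟨f, hf, hc, hr⟩ := h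
  refine ⟨fun i => tmap e he (f i), ?_, ?_, ?_⟩
  · rw [tmap_card]; beta_reduce; rw [hf]
  · intro i h1 h2
    rw [tmap_card] at h2
    obtain ⟨u, v, huv⟩ := hc i h1 h2
    exact ⟨e u, e v, tmap_isContractionAt huv⟩
  · intro i h1 h2
    rw [tmap_card] at h2
    exact tmap_redDegLE (hr i h1 h2)

end Trigraph

end Aux

section Lift

open Finset

variable {V : Type*} [DecidableEq V] {G : SimpleGraph V} {G' : SimpleGraph (V × Bool)}
  {sign : V → V → Bool}

/-- Maximum degree at most 3. -/
def Deg3 {U : Type*} (H : SimpleGraph U) : Prop := ∀ v, {w | H.Adj v w}.ncard ≤ 3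

lemma lift_fst
    (hadj : ∀ u v i j, G'.Adj (u, i) (v, j) ↔
      (G.Adj u v ∧ ((sign u v = true ∧ i = j) ∨ (sign u v = false ∧ i ≠ j))))
    (p q : V × Bool) (h : G'.Adj p q) : G.Adj p.1 q.1 := by
  obtain ⟨u, i⟩ := p
  obtain ⟨v, j⟩ := q
  exact ((hadj u v i j).mp h).1

lemma lift_not_both
    (hadj : ∀ u v i j, G'.Adj (u, i) (v, j) ↔
      (G.Adj u v ∧ ((sign u v = true ∧ i = j) ∨ (sign u v = false ∧ i ≠ j))))
    (v : V) (x : V × Bool) : ¬(G'.Adj (v, false) x ∧ G'.Adj (v, true) x) := by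
  obtain ⟨w, j⟩ := x
  rw [hadj, hadj]
  rintro ⟨⟨-, h1⟩, ⟨-, h2⟩⟩
  rcases h1 with ⟨hs, hj⟩ | ⟨hs, hj⟩ <;> rcases h2 with ⟨hs', hj'⟩ | ⟨hs', hj'⟩
  · exact Bool.noConfusion (hj.trans hj'.symm)
  · exact Bool.noConfusion (hs.symm.trans hs')
  · exact Bool.noConfusion (hs.symm.trans hs')
  · cases j
    · exact hj rfl
    · exact hj' rfl

lemma lift_not_both'
    (hadj : ∀ u v i j, G'.Adj (u, i) (v, j) ↔
      (G.Adj u v ∧ ((sign u v = true ∧ i = j) ∨ (sign u v = false ∧ i ≠ j))))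
    (x : V × Bool) (w : V) : ¬(G'.Adj x (w, false) ∧ G'.Adj x (w, true)) := by
  obtain ⟨u, i⟩ := x
  rw [hadj, hadj]
  rintro ⟨⟨-, h1⟩, ⟨-, h2⟩⟩
  rcases h1 with ⟨hs, hj⟩ | ⟨hs, hj⟩ <;> rcases h2 with ⟨hs', hj'⟩ | ⟨hs', hj'⟩
  · exact Bool.noConfusion (hj.symm.trans hj')
  · exact Bool.noConfusion (hs.symm.trans hs')
  · exact Bool.noConfusion (hs.symm.trans hs')
  · cases i
    · exact hj rfl
    · exact hj' rfl

lemma lift_exists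
    (hadj : ∀ u v i j, G'.Adj (u, i) (v, j) ↔
      (G.Adj u v ∧ ((sign u v = true ∧ i = j) ∨ (sign u v = false ∧ i ≠ j))))
    {v : V} {x : V × Bool} (h : G.Adj v x.1) : ∃ b, G'.Adj (v, b) x := by
  obtain ⟨w, j⟩ := x
  cases hs : sign v w
  · exact ⟨!j, (hadj v w (!j) j).mpr ⟨h, Or.inr ⟨hs, by cases j <;> simp⟩⟩⟩
  · exact ⟨j, (hadj v w j j).mpr ⟨h, Or.inl ⟨hs, rfl⟩⟩⟩

lemma deg3_lift [Fintype V]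
    (hadj : ∀ u v i j, G'.Adj (u, i) (v, j) ↔
      (G.Adj u v ∧ ((sign u v = true ∧ i = j) ∨ (sign u v = false ∧ i ≠ j))))
    (h3 : Deg3 G) : Deg3 G' := by
  rintro ⟨u, i⟩
  have hle : {q | G'.Adj (u, i) q}.ncard ≤ {w | G.Adj u w}.ncard := by
    apply Set.ncard_le_ncard_of_injOn Prod.fst
    · rintro ⟨w, j⟩ hq
      exact lift_fst hadj _ _ hq
    · rintro ⟨w, j⟩ hq ⟨w', j'⟩ hq' hfst
      simp only [Set.mem_setOf_eq] at hq hq'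
      dsimp at hfst
      subst hfst
      by_cases hj : j = j'
      · rw [hj]
      · exfalso
        apply lift_not_both' hadj (u, i) w
        cases j <;> cases j'
        · exact absurd rfl hj
        · exact ⟨hq, hq'⟩
        · exact ⟨hq', hq⟩
        · exact absurd rfl hj
  exact le_trans hle (h3 u)

/-- The trigraph of a simple graph with an arbitrary black/red colouring of its edges. -/
def cTri [Fintype V] (G : SimpleGraph V) (c : V → V → Prop) : Trigraph V where
  verts := Finset.univ
  black u v := G.Adj u v ∧ c u v ∧ c v u
  red u v := G.Adj u v ∧ ¬(c u v ∧ c v u)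
  black_symm := fun _ _ ⟨h, h1, h2⟩ => ⟨h.symm, h2, h1⟩
  red_symm := fun _ _ ⟨h, hn⟩ => ⟨h.symm, fun ⟨a, b⟩ => hn ⟨b, a⟩⟩
  black_irrefl := fun _ h => G.irrefl h.1
  red_irrefl := fun _ h => G.irrefl h.1
  black_red_disjoint := fun _ _ hb hr => hr.2 hb.2
  black_mem := fun _ _ _ => ⟨Finset.mem_univ _, Finset.mem_univ _⟩
  red_mem := fun _ _ _ => ⟨Finset.mem_univ _, Finset.mem_univ _⟩

lemma cTri_verts [Fintype V] (c : V → V → Prop) : (cTri G c).verts = Finset.univ := rfl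

lemma cTri_black [Fintype V] (c : V → V → Prop) (u v : V) :
    (cTri G c).black u v ↔ G.Adj u v ∧ c u v ∧ c v u := Iff.rfl

lemma cTri_red [Fintype V] (c : V → V → Prop) (u v : V) :
    (cTri G c).red u v ↔ G.Adj u v ∧ ¬(c u v ∧ c v u) := Iff.rfl

/-- Intermediate trigraph in the stage contracting all pairs of a 2-lift:
the pairs over `S` have already been contracted (onto their `false` copy). -/
def stg [Fintype V] (G : SimpleGraph V) (G' : SimpleGraph (V × Bool))
    (c : V × Bool → V × Bool → Prop) (S : Finset V) : Trigraph (V × Bool) where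
  verts := Finset.univ.filter (fun p => p.1 ∈ S → p.2 = false)
  black p q := p.1 ∉ S ∧ q.1 ∉ S ∧ G'.Adj p q ∧ c p q ∧ c q p
  red p q := (p.1 ∈ S → p.2 = false) ∧ (q.1 ∈ S → q.2 = false) ∧
    ((p.1 ∉ S ∧ q.1 ∉ S ∧ G'.Adj p q ∧ ¬(c p q ∧ c q p)) ∨
     ((p.1 ∈ S ∨ q.1 ∈ S) ∧ G.Adj p.1 q.1))
  black_symm := fun _ _ ⟨h1, h2, h3, h4, h5⟩ => ⟨h2, h1, h3.symm, h5, h4⟩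
  red_symm := by
    rintro p q ⟨h1, h2, h3⟩
    refine ⟨h2, h1, ?_⟩
    rcases h3 with ⟨a, b, hA, hn⟩ | ⟨ho, hA⟩
    · exact Or.inl ⟨b, a, hA.symm, fun ⟨x, y⟩ => hn ⟨y, x⟩⟩
    · exact Or.inr ⟨ho.symm, hA.symm⟩
  black_irrefl := fun p h => G'.irrefl h.2.2.1
  red_irrefl := by
    rintro p ⟨-, -, h⟩
    rcases h with ⟨-, -, hA, -⟩ | ⟨-, hA⟩
    · exact G'.irrefl hA
    · exact G.irrefl hA
  black_red_disjoint := by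
    rintro p q ⟨hp, hq, hA, hc1, hc2⟩ ⟨-, -, h⟩
    rcases h with ⟨-, -, -, hn⟩ | ⟨ho, -⟩
    · exact hn ⟨hc1, hc2⟩
    · rcases ho with h' | h'
      · exact hp h'
      · exact hq h'
  black_mem := by
    rintro p q ⟨hp, hq, -, -, -⟩
    constructor <;> rw [Finset.mem_filter]
    · exact ⟨Finset.mem_univ _, fun h => absurd h hp⟩
    · exact ⟨Finset.mem_univ _, fun h => absurd h hq⟩
  red_mem := by
    rintro p q ⟨hp, hq, -⟩
    constructor <;> rw [Finset.mem_filter]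
    · exact ⟨Finset.mem_univ _, hp⟩
    · exact ⟨Finset.mem_univ _, hq⟩

lemma stg_verts [Fintype V] (c : V × Bool → V × Bool → Prop) (S : Finset V) :
    (stg G G' c S).verts = Finset.univ.filter (fun p => p.1 ∈ S → p.2 = false) := rfl

lemma stg_black [Fintype V] (c : V × Bool → V × Bool → Prop) (S : Finset V) (p q : V × Bool) :
    (stg G G' c S).black p q ↔
      (p.1 ∉ S ∧ q.1 ∉ S ∧ G'.Adj p q ∧ c p q ∧ c q p) := Iff.rfl

lemma stg_red [Fintype V] (c : V × Bool → V × Bool → Prop) (S : Finset V) (p q : V × Bool) :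
    (stg G G' c S).red p q ↔
      ((p.1 ∈ S → p.2 = false) ∧ (q.1 ∈ S → q.2 = false) ∧
       ((p.1 ∉ S ∧ q.1 ∉ S ∧ G'.Adj p q ∧ ¬(c p q ∧ c q p)) ∨
        ((p.1 ∈ S ∨ q.1 ∈ S) ∧ G.Adj p.1 q.1))) := Iff.rfl

lemma stg_redDegLE [Fintype V] (h3 : Deg3 G) (h3' : Deg3 G')
    (c : V × Bool → V × Bool → Prop) (S : Finset V) :
    (stg G G' c S).RedDegLE 6 := by
  intro p
  by_cases hp : p.1 ∈ S
  · have hsub : {q | (stg G G' c S).red p q} ⊆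
        ((fun w => (w, false)) '' {w | G.Adj p.1 w}) ∪
        ((fun w => (w, true)) '' {w | G.Adj p.1 w}) := by
      intro q hq
      rw [Set.mem_setOf_eq, stg_red] at hq
      obtain ⟨w, b⟩ := q
      obtain ⟨-, -, h | h⟩ := hq
      · exact absurd hp h.1
      · cases b
        · exact Or.inl ⟨w, h.2, rfl⟩
        · exact Or.inr ⟨w, h.2, rfl⟩
    calc (stg G G' c S).redDeg p
        ≤ _ := Set.ncard_le_ncard hsub (Set.toFinite _)
      _ ≤ _ + _ := Set.ncard_union_le _ _
      _ ≤ 3 + 3 := add_le_add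
          (le_trans (Set.ncard_image_le (Set.toFinite _)) (h3 p.1))
          (le_trans (Set.ncard_image_le (Set.toFinite _)) (h3 p.1))
      _ ≤ 6 := by norm_num
  · have hsub : {q | (stg G G' c S).red p q} ⊆
        {q | G'.Adj p q} ∪ ((fun w => (w, false)) '' {w | G.Adj p.1 w}) := by
      intro q hq
      rw [Set.mem_setOf_eq, stg_red] at hq
      obtain ⟨w, b⟩ := q
      obtain ⟨-, hq2, h | h⟩ := hq
      · exact Or.inl h.2.2.1
      · have hw : w ∈ S := by
          rcases h.1 with h' | h'
          · exact absurd h' hp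
          · exact h'
        have hb : b = false := hq2 hw
        subst hb
        exact Or.inr ⟨w, h.2, rfl⟩
    calc (stg G G' c S).redDeg p
        ≤ _ := Set.ncard_le_ncard hsub (Set.toFinite _)
      _ ≤ _ + _ := Set.ncard_union_le _ _
      _ ≤ 3 + 3 := add_le_add (h3' p)
          (le_trans (Set.ncard_image_le (Set.toFinite _)) (h3 p.1))
      _ ≤ 6 := by norm_num

lemma stg_contract [Fintype V]
    (hadj : ∀ u v i j, G'.Adj (u, i) (v, j) ↔
      (G.Adj u v ∧ ((sign u v = true ∧ i = j) ∨ (sign u v = false ∧ i ≠ j))))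
    (c : V × Bool → V × Bool → Prop) {S : Finset V} {v : V} (hv : v ∉ S) :
    Trigraph.IsContractionAt (stg G G' c S) (stg G G' c (insert v S)) (v, false) (v, true) := by
  have key : ∀ x : V × Bool, x ≠ (v, false) → x ≠ (v, true) → x.1 ≠ v := by
    rintro ⟨a, b⟩ h1 h2 rfl
    cases b
    · exact h1 rfl
    · exact h2 rfl
  refine ⟨?_, ?_, ?_, ?_, ?_, ?_, ?_, ?_⟩
  · rw [stg_verts]
    simp [hv]
  · rw [stg_verts]
    simp [hv]
  · simp
  · rw [stg_verts, stg_verts]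
    ext ⟨w, b⟩
    by_cases hw : w = v
    · subst hw
      cases b <;> simp [hv]
    · simp [Finset.mem_insert, Finset.mem_erase, hw, Prod.ext_iff]
  · -- black x y
    intro x y hx hy
    rw [stg_black, stg_black]
    constructor
    · rintro ⟨hxS, hyS, hA, hc1, hc2⟩
      rw [Finset.mem_insert, not_or] at hxS hyS
      exact ⟨⟨hxS.2, hyS.2, hA, hc1, hc2⟩, fun h => hxS.1 (congrArg Prod.fst h),
        fun h => hyS.1 (congrArg Prod.fst h)⟩
    · rintro ⟨⟨hxS, hyS, hA, hc1, hc2⟩, hx2, hy2⟩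
      refine ⟨?_, ?_, hA, hc1, hc2⟩
      · rw [Finset.mem_insert, not_or]
        exact ⟨key x hx hx2, hxS⟩
      · rw [Finset.mem_insert, not_or]
        exact ⟨key y hy hy2, hyS⟩
  · -- red x y
    intro x y hx hy
    by_cases hx2 : x = (v, true)
    · subst hx2
      rw [stg_red]
      constructor
      · rintro ⟨h1, -, -⟩
        exact absurd (h1 (Finset.mem_insert_self v S)) (by simp)
      · rintro ⟨-, h, -⟩
        exact absurd rfl h
    by_cases hy2 : y = (v, true)
    · subst hy2
      rw [stg_red]
      constructor
      · rintro ⟨-, h1, -⟩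
        exact absurd (h1 (Finset.mem_insert_self v S)) (by simp)
      · rintro ⟨-, -, h⟩
        exact absurd rfl h
    have hx1 := key x hx hx2
    have hy1 := key y hy hy2
    rw [stg_red, stg_red]
    simp only [Finset.mem_insert, hx1, hy1, false_or]
    constructor
    · intro h
      exact ⟨h, hx2, hy2⟩
    · rintro ⟨h, -, -⟩
      exact h
  · -- black (v, false) x
    intro x hx hx2
    rw [stg_black, stg_black, stg_black]
    constructor
    · rintro ⟨habs, -⟩
      exact absurd (Finset.mem_insert_self v S) habs
    · rintro ⟨⟨-, -, hA1, -⟩, ⟨-, -, hA2, -⟩⟩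
      exact absurd ⟨hA1, hA2⟩ (lift_not_both hadj v x)
  · -- red (v, false) x
    intro x hx hx2
    have hx1 := key x hx hx2
    rw [stg_red, stg_black, stg_red, stg_black, stg_red]
    constructor
    · rintro ⟨-, hxm, hD⟩
      have hxm' : x.1 ∈ S → x.2 = false := fun h => hxm (Finset.mem_insert_of_mem h)
      have hGA : G.Adj v x.1 := by
        rcases hD with ⟨habs, -⟩ | ⟨-, hA⟩
        · exact absurd (Finset.mem_insert_self v S) habs
        · exact hA
      constructor
      · by_cases hxS : x.1 ∈ S
        · exact Or.inr (Or.inl ⟨fun _ => rfl, hxm', Or.inr ⟨Or.inr hxS, hGA⟩⟩)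
        · obtain ⟨b, hb⟩ := lift_exists hadj (x := x) hGA
          by_cases hc' : c (v, b) x ∧ c x (v, b)
          · cases b
            · exact Or.inl ⟨hv, hxS, hb, hc'.1, hc'.2⟩
            · exact Or.inr (Or.inr (Or.inl ⟨hv, hxS, hb, hc'.1, hc'.2⟩))
          · cases b
            · exact Or.inr (Or.inl ⟨fun h => absurd h hv, fun h => absurd h hxS,
                Or.inl ⟨hv, hxS, hb, hc'⟩⟩)
            · exact Or.inr (Or.inr (Or.inr ⟨fun h => absurd h hv, fun h => absurd h hxS,
                Or.inl ⟨hv, hxS, hb, hc'⟩⟩))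
      · rintro ⟨⟨-, -, hA1, -⟩, ⟨-, -, hA2, -⟩⟩
        exact absurd ⟨hA1, hA2⟩ (lift_not_both hadj v x)
    · rintro ⟨hD, -⟩
      have hxm : x.1 ∈ S → x.2 = false := by
        rcases hD with ⟨-, h, -⟩ | ⟨-, h, -⟩ | ⟨-, h, -⟩ | ⟨-, h, -⟩
        · exact fun hh => absurd hh h
        · exact h
        · exact fun hh => absurd hh h
        · exact h
      have hGA : G.Adj v x.1 := by
        rcases hD with ⟨-, -, hA, -⟩ | ⟨-, -, hD'⟩ | ⟨-, -, hA, -⟩ | ⟨-, -, hD'⟩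
        · exact lift_fst hadj _ _ hA
        · rcases hD' with ⟨-, -, hA, -⟩ | ⟨-, hA⟩
          · exact lift_fst hadj _ _ hA
          · exact hA
        · exact lift_fst hadj _ _ hA
        · rcases hD' with ⟨-, -, hA, -⟩ | ⟨-, hA⟩
          · exact lift_fst hadj _ _ hA
          · exact hA
      refine ⟨fun _ => rfl, ?_, Or.inr ⟨Or.inl (Finset.mem_insert_self v S), hGA⟩⟩
      intro h
      rcases Finset.mem_insert.mp h with h' | h'
      · exact absurd h' hx1
      · exact hxm h'

lemma stg_seq [Fintype V]
    (hadj : ∀ u v i j, G'.Adj (u, i) (v, j) ↔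
      (G.Adj u v ∧ ((sign u v = true ∧ i = j) ∨ (sign u v = false ∧ i ≠ j))))
    (h3 : Deg3 G) (h3' : Deg3 G') (c : V × Bool → V × Bool → Prop) (S : Finset V) :
    Trigraph.Seq (stg G G' c ∅) (stg G G' c S) 6 := by
  induction S using Finset.induction_on with
  | empty => exact Trigraph.Seq.refl (stg_redDegLE h3 h3' c ∅)
  | @insert a S ha ih =>
    exact ih.trans (Trigraph.Seq.single (stg_contract hadj c ha)
      (stg_redDegLE h3 h3' c S) (stg_redDegLE h3 h3' c (insert a S)))

lemma embinj : Function.Injective (fun w : V => (w, false)) :=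
  fun _ _ h => congrArg Prod.fst h

lemma stg_empty [Fintype V] (c : V × Bool → V × Bool → Prop) :
    stg G G' c ∅ = cTri G' c := by
  refine Trigraph.ext' ?_ ?_ ?_
  · rw [stg_verts, cTri_verts]
    ext p
    simp
  · intro p q
    rw [stg_black, cTri_black]
    simp
  · intro p q
    rw [stg_red, cTri_red]
    simp

lemma stg_univ [Fintype V] (c : V × Bool → V × Bool → Prop) :
    stg G G' c Finset.univ =
      Trigraph.tmap (fun w : V => (w, false)) embinj (cTri G fun _ _ => False) := by
  refine Trigraph.ext' ?_ ?_ ?_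
  · rw [stg_verts]
    ext ⟨w, b⟩
    simp only [Finset.mem_filter, Finset.mem_univ, true_and, Trigraph.tmap, cTri_verts,
      Finset.mem_image, Prod.ext_iff, true_implies]
    constructor
    · rintro h
      exact ⟨w, rfl, h.symm⟩
    · rintro ⟨a, ha, hb⟩
      exact hb.symm
  · intro p q
    rw [stg_black]
    constructor
    · rintro ⟨h, -⟩
      exact absurd (Finset.mem_univ _) h
    · rintro ⟨a, b, ⟨-, h, -⟩, -⟩
      exact h.elim
  · intro p q
    rw [stg_red]
    constructor
    · rintro ⟨h1, h2, hD⟩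
      have hA : G.Adj p.1 q.1 := by
        rcases hD with ⟨h, -⟩ | ⟨-, h⟩
        · exact absurd (Finset.mem_univ _) h
        · exact h
      refine ⟨p.1, q.1, ⟨hA, by simp⟩, ?_, ?_⟩
      · exact Prod.ext rfl (h1 (Finset.mem_univ _))
      · exact Prod.ext rfl (h2 (Finset.mem_univ _))
    · rintro ⟨a, b, ⟨hA, -⟩, hp, hq⟩
      subst hp
      subst hq
      exact ⟨fun _ => rfl, fun _ => rfl, Or.inr ⟨Or.inl (Finset.mem_univ _), hA⟩⟩

lemma step_hasSeq [Fintype V] (hl : IsTwoLift G G') (h3 : Deg3 G)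
    (ih : ∀ c : V → V → Prop, (cTri G c).HasSeq 6) (c' : V × Bool → V × Bool → Prop) :
    (cTri G' c').HasSeq 6 := by
  obtain ⟨sign, -, hadj⟩ := hl
  have h3' : Deg3 G' := deg3_lift hadj h3
  have hseq := stg_seq hadj h3 h3' c' Finset.univ
  rw [stg_empty, stg_univ] at hseq
  exact hseq.hasSeq (Trigraph.tmap_hasSeq (ih fun _ _ => False))

lemma toTrigraph_eq [Fintype V] (G : SimpleGraph V) :
    G.toTrigraph = cTri G (fun _ _ => True) := by
  refine Trigraph.ext' rfl ?_ ?_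
  · intro u v
    simp [SimpleGraph.toTrigraph, SimpleGraph.toTrigraphOn, cTri]
  · intro u v
    simp [SimpleGraph.toTrigraph, SimpleGraph.toTrigraphOn, cTri]

end Lift

/-- every graph obtained from `K₄` by a finite sequence of 2-lifts has
twin-width at most 6. -/
theorem twin_width_iterated_two_lifts (m : ℕ) (Gs : ∀ k, SimpleGraph (LiftType k))
    (h0 : Gs 0 = ⊤) (hlift : ∀ k, k < m → IsTwoLift (Gs k) (Gs (k + 1))) :
    Trigraph.tww (Gs m).toTrigraph ≤ 6 := by
  have hdeg : ∀ k, k ≤ m → Deg3 (Gs k) := by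
    intro k
    induction k with
    | zero =>
      intro _ v
      have hset : {w | (Gs 0).Adj v w} = ↑(Finset.univ.erase v) := by
        rw [h0]
        ext w
        simp [Finset.mem_erase, ne_comm]
      rw [hset, Set.ncard_coe_finset, Finset.card_erase_of_mem (Finset.mem_univ v),
        Finset.card_univ]
      have h4 : Fintype.card (LiftType 0) = 4 := rfl
      omega
    | succ k ihk =>
      intro hk
      obtain ⟨sign, -, hadj⟩ := hlift k (by omega)
      exact deg3_lift hadj (ihk (by omega))
  have main : ∀ k, k ≤ m → ∀ c : LiftType k → LiftType k → Prop,
      (cTri (Gs k) c).HasSeq 6 := by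
    intro k
    induction k with
    | zero =>
      intro _ c
      refine Trigraph.hasSeq_of_small 4 _ ?_ (by omega) (by omega)
      have h4 : Fintype.card (LiftType 0) = 4 := rfl
      simpa [cTri_verts, Finset.card_univ] using h4
    | succ k ihk =>
      intro hk c
      exact step_hasSeq (hlift k (by omega)) (hdeg k (by omega)) (ihk (by omega)) c
  have h6 : (Gs m).toTrigraph.HasSeq 6 := by
    rw [toTrigraph_eq]
    exact main m le_rfl _
  exact Nat.sInf_le h6
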